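/- Let ∑ a_n be a conditionally convergent series of real numbers and let A ⊆ ℕ be tame with respect to ∑ a_n with the subseries of a over A tending to +∞. If C ⊆ A and the subseries of a over C does not converge to any real number, then ∑_{n ∈ C, a_n ≤ 0} |a_n| < ∞ and the partial sums ∑_{n < N, n ∈ C, a_n > 0} a_n tend to +∞. -/
import Mathlib


open Filter

/-- The partial sums of the subseries of `a` over `A`: `S N = ∑_{n < N, n ∈ A} a n`. -/
noncomputable def partialSum (a : ℕ → ℝ) (A : Set ℕ) (N : ℕ) : ℝ :=
  ∑ n ∈ Finset.range N, Set.indicator A a n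

/-- `A` sends the series `∑ a n` to infinity: the subseries over `A` tends to `+∞` or `-∞`. -/
def SendsToInfinity (a : ℕ → ℝ) (A : Set ℕ) : Prop :=
  Tendsto (partialSum a A) atTop atTop ∨ Tendsto (partialSum a A) atTop atBot

/-- `∑ a n` is conditionally convergent: partial sums converge, but `∑ |a n| = ∞`. -/
def CondConv (a : ℕ → ℝ) : Prop :=
  (∃ L : ℝ, Tendsto (fun N => ∑ n ∈ Finset.range N, a n) atTop (nhds L)) ∧
    ¬ Summable (fun n => |a n|)

/-- The subseries of `a` over `A` is absolutely convergent: `∑_{n ∈ A} |a n| < ∞`. -/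
def AbsConvOn (a : ℕ → ℝ) (A : Set ℕ) : Prop :=
  Summable (Set.indicator A fun n => |a n|)

/-- `A` is tame w.r.t. `∑ a n` if at least one of the positive/nonpositive parts of the
subseries over `A` is absolutely convergent. -/
def Tame (a : ℕ → ℝ) (A : Set ℕ) : Prop :=
  AbsConvOn a {n ∈ A | 0 < a n} ∨ AbsConvOn a {n ∈ A | a n ≤ 0}

lemma indicator_split (a : ℕ → ℝ) (A : Set ℕ) (n : ℕ) :
    Set.indicator A a n =
      Set.indicator {n ∈ A | 0 < a n} a n + Set.indicator {n ∈ A | a n ≤ 0} a n := by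
  by_cases hA : n ∈ A
  · by_cases hp : 0 < a n
    · rw [Set.indicator_of_mem hA, Set.indicator_of_mem (show n ∈ {n ∈ A | 0 < a n} from ⟨hA, hp⟩),
        Set.indicator_of_notMem (fun h => absurd h.2 (not_le.mpr hp))]; ring
    · rw [Set.indicator_of_mem hA, Set.indicator_of_notMem (fun h => hp h.2),
        Set.indicator_of_mem (show n ∈ {n ∈ A | a n ≤ 0} from ⟨hA, not_lt.mp hp⟩)]; ring
  · rw [Set.indicator_of_notMem hA, Set.indicator_of_notMem (fun h => hA h.1),
      Set.indicator_of_notMem (fun h => hA h.1)]; ring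

lemma partialSum_split (a : ℕ → ℝ) (A : Set ℕ) (N : ℕ) :
    partialSum a A N =
      partialSum a {n ∈ A | 0 < a n} N + partialSum a {n ∈ A | a n ≤ 0} N := by
  unfold partialSum
  rw [← Finset.sum_add_distrib]
  exact Finset.sum_congr rfl fun n _ => indicator_split a A n

lemma absconv_conv {a : ℕ → ℝ} {B : Set ℕ} (h : AbsConvOn a B) :
    ∃ L : ℝ, Tendsto (partialSum a B) atTop (nhds L) := by
  have hs : Summable (Set.indicator B a) := by
    apply Summable.of_abs
    have : (fun n => |Set.indicator B a n|) = Set.indicator B fun n => |a n| := by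
      funext n
      by_cases hn : n ∈ B
      · simp [Set.indicator_of_mem hn]
      · simp [Set.indicator_of_notMem hn]
    rw [this]; exact h
  exact ⟨_, hs.hasSum.tendsto_sum_nat⟩

lemma balance_aux (a : ℕ → ℝ) (A : Set ℕ)
    (hA : AbsConvOn a {n ∈ A | 0 < a n} ∨ AbsConvOn a {n ∈ A | a n ≤ 0})
    (htop : Tendsto (partialSum a A) atTop atTop)
    (C : Set ℕ) (hCA : C ⊆ A)
    (hC : ¬ ∃ L : ℝ, Tendsto (partialSum a C) atTop (nhds L)) :
    AbsConvOn a {n ∈ C | a n ≤ 0} ∧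
      Tendsto (partialSum a {n ∈ C | 0 < a n}) atTop atTop := by
  -- Step 1: the nonpositive part of A is absolutely convergent
  have hnegA : AbsConvOn a {n ∈ A | a n ≤ 0} := by
    rcases hA with hpos | hneg
    swap
    · exact hneg
    · exfalso
      obtain ⟨L, hL⟩ := absconv_conv hpos
      have hle : ∀ N, partialSum a {n ∈ A | a n ≤ 0} N ≤ 0 := fun N =>
        Finset.sum_nonpos fun n _ => Set.indicator_apply_nonpos (fun h => h.2)
      have hev1 : ∀ᶠ N in atTop, L + 1 ≤ partialSum a A N := htop.eventually_ge_atTop (L + 1)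
      have hev2 : ∀ᶠ N in atTop, partialSum a {n ∈ A | 0 < a n} N < L + 1 :=
        hL.eventually (gt_mem_nhds (lt_add_one L))
      obtain ⟨N, h1, h2⟩ := (hev1.and hev2).exists
      have := partialSum_split a A N
      linarith [hle N]
  -- Step 2: nonpositive part of C
  have hnegC : AbsConvOn a {n ∈ C | a n ≤ 0} := by
    unfold AbsConvOn
    apply Summable.of_nonneg_of_le (f := Set.indicator {n ∈ A | a n ≤ 0} fun n => |a n|)
    · intro n; exact Set.indicator_apply_nonneg fun _ => abs_nonneg _
    · intro n
      exact Set.indicator_le_indicator_of_subset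
        (show {n ∈ C | a n ≤ 0} ⊆ {n ∈ A | a n ≤ 0} from fun x hx => ⟨hCA hx.1, hx.2⟩)
        (fun n => abs_nonneg _) n
    · exact hnegA
  refine ⟨hnegC, ?_⟩
  -- Step 3: positive part of C tends to atTop
  have hmono : Monotone (partialSum a {n ∈ C | 0 < a n}) := by
    apply monotone_nat_of_le_succ
    intro N
    have : partialSum a {n ∈ C | 0 < a n} (N + 1) =
        partialSum a {n ∈ C | 0 < a n} N + Set.indicator {n ∈ C | 0 < a n} a N := by
      unfold partialSum; rw [Finset.sum_range_succ]
    rw [this]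
    have := Set.indicator_apply_nonneg (f := a) (s := {n ∈ C | 0 < a n})
      (a := N) (fun h => le_of_lt h.2)
    linarith
  rcases tendsto_of_monotone hmono with h | ⟨l, hl⟩
  · exact h
  · exfalso
    obtain ⟨L, hL⟩ := absconv_conv hnegC
    exact hC ⟨l + L, by
      have := hl.add hL
      refine this.congr fun N => (partialSum_split a C N).symm⟩


/-- Claim 1 in Lemma 9: if `A` is tame with subseries tending to `+∞`, `C ⊆ A`, and the
subseries over `C` does not converge, then the nonpositive part of the subseries over `C`
is absolutely convergent and the positive part tends to `+∞`. -/
theorem balance_two_claim_one (a : ℕ → ℝ) (hcc : CondConv a) (A : Set ℕ)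
    (hA : Tame a A) (htop : Tendsto (partialSum a A) atTop atTop)
    (C : Set ℕ) (hCA : C ⊆ A)
    (hC : ¬ ∃ L : ℝ, Tendsto (partialSum a C) atTop (nhds L)) :
    AbsConvOn a {n ∈ C | a n ≤ 0} ∧
      Tendsto (partialSum a {n ∈ C | 0 < a n}) atTop atTop := by
  exact balance_aux a A hA htop C hCA hC
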